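/- Suppose β₁ = 1 + k₁α₁ and β₂ = −ε + k₂α₂ for some ε ∈ {1,−1} and some integers k₁, k₂. Then for every integer b, the identity w(0, b, 1, −b + k₁ + k₂) = η₂^{ε} holds in G. -/
import Mathlib


/- The group `G = ⟨c₁, c₂, h ∣ [c₁,h], [c₂,h], c₁^{α₁}h^{β₁}, c₂^{α₂}h^{β₂}⟩`,
the fundamental group of the Seifert fibered space `D(β₁/α₁, β₂/α₂)`. -/
def seifertRels (α₁ α₂ β₁ β₂ : ℤ) : Set (FreeGroup (Fin 3)) :=
  {FreeGroup.of 0 * FreeGroup.of 2 * (FreeGroup.of 0)⁻¹ * (FreeGroup.of 2)⁻¹,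
   FreeGroup.of 1 * FreeGroup.of 2 * (FreeGroup.of 1)⁻¹ * (FreeGroup.of 2)⁻¹,
   FreeGroup.of 0 ^ α₁ * FreeGroup.of 2 ^ β₁,
   FreeGroup.of 1 ^ α₂ * FreeGroup.of 2 ^ β₂}

abbrev SeifertGroup (α₁ α₂ β₁ β₂ : ℤ) := PresentedGroup (seifertRels α₁ α₂ β₁ β₂)

variable (α₁ α₂ β₁ β₂ : ℤ)

/-- The generator `c₁`. -/
def c₁ : SeifertGroup α₁ α₂ β₁ β₂ := PresentedGroup.of 0

/-- The generator `c₂`. -/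
def c₂ : SeifertGroup α₁ α₂ β₁ β₂ := PresentedGroup.of 1

/-- The generator `h` (a regular fiber). -/
def hGen : SeifertGroup α₁ α₂ β₁ β₂ := PresentedGroup.of 2

/-- The class `η₁ = c₁^{γ₁} h^{δ₁}` of the first exceptional fiber. -/
def η₁ (γ₁ δ₁ : ℤ) : SeifertGroup α₁ α₂ β₁ β₂ :=
  c₁ α₁ α₂ β₁ β₂ ^ γ₁ * hGen α₁ α₂ β₁ β₂ ^ δ₁

/-- The class `η₂ = c₂^{γ₂} h^{δ₂}` of the second exceptional fiber. -/
def η₂ (γ₂ δ₂ : ℤ) : SeifertGroup α₁ α₂ β₁ β₂ :=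
  c₂ α₁ α₂ β₁ β₂ ^ γ₂ * hGen α₁ α₂ β₁ β₂ ^ δ₂

/-- The word `w(a,b,c,d) = (c₁c₂)^a h^b · η₁ · (c₁c₂)^c h^d`. -/
def w (γ₁ δ₁ a b c d : ℤ) : SeifertGroup α₁ α₂ β₁ β₂ :=
  (c₁ α₁ α₂ β₁ β₂ * c₂ α₁ α₂ β₁ β₂) ^ a * hGen α₁ α₂ β₁ β₂ ^ b *
    η₁ α₁ α₂ β₁ β₂ γ₁ δ₁ *
    (c₁ α₁ α₂ β₁ β₂ * c₂ α₁ α₂ β₁ β₂) ^ c * hGen α₁ α₂ β₁ β₂ ^ d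

lemma seifert_rel_one {r : FreeGroup (Fin 3)} (hr : r ∈ seifertRels α₁ α₂ β₁ β₂) :
    PresentedGroup.mk (seifertRels α₁ α₂ β₁ β₂) r = 1 :=
  (QuotientGroup.eq_one_iff _).mpr (Subgroup.subset_normalClosure hr)

lemma comm_c₁ : Commute (c₁ α₁ α₂ β₁ β₂) (hGen α₁ α₂ β₁ β₂) := by
  have := seifert_rel_one α₁ α₂ β₁ β₂ (r := FreeGroup.of 0 * FreeGroup.of 2 *
    (FreeGroup.of 0)⁻¹ * (FreeGroup.of 2)⁻¹) (by simp [seifertRels])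
  simp only [map_mul, map_inv] at this
  have h' := congrArg (· * (hGen α₁ α₂ β₁ β₂) * (c₁ α₁ α₂ β₁ β₂)) this
  simpa [c₁, c₂, hGen, PresentedGroup.of, mul_assoc, Commute, SemiconjBy] using h'

lemma comm_c₂ : Commute (c₂ α₁ α₂ β₁ β₂) (hGen α₁ α₂ β₁ β₂) := by
  have := seifert_rel_one α₁ α₂ β₁ β₂ (r := FreeGroup.of 1 * FreeGroup.of 2 *
    (FreeGroup.of 1)⁻¹ * (FreeGroup.of 2)⁻¹) (by simp [seifertRels])
  simp only [map_mul, map_inv] at this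
  have h' := congrArg (· * (hGen α₁ α₂ β₁ β₂) * (c₂ α₁ α₂ β₁ β₂)) this
  simpa [c₁, c₂, hGen, PresentedGroup.of, mul_assoc, Commute, SemiconjBy] using h'

lemma rel_c₁ : c₁ α₁ α₂ β₁ β₂ ^ α₁ * hGen α₁ α₂ β₁ β₂ ^ β₁ = 1 := by
  have := seifert_rel_one α₁ α₂ β₁ β₂ (r := FreeGroup.of 0 ^ α₁ * FreeGroup.of 2 ^ β₁)
    (by simp [seifertRels])
  simpa [c₁, hGen, PresentedGroup.of, map_mul, map_zpow] using this

lemma rel_c₂ : c₂ α₁ α₂ β₁ β₂ ^ α₂ * hGen α₁ α₂ β₁ β₂ ^ β₂ = 1 := by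
  have := seifert_rel_one α₁ α₂ β₁ β₂ (r := FreeGroup.of 1 ^ α₂ * FreeGroup.of 2 ^ β₂)
    (by simp [seifertRels])
  simpa [c₂, hGen, PresentedGroup.of, map_mul, map_zpow] using this

/-- If `β₁ = 1 + k₁α₁` and `β₂ = −ε + k₂α₂` with `ε ∈ {1,−1}`, then for every integer `b`,
`w(0, b, 1, −b + k₁ + k₂) = η₂^ε` in `G`. -/
theorem statement3 (γ₁ δ₁ γ₂ δ₂ ε k₁ k₂ : ℤ)
    (hα₁ : 1 < α₁) (hα₂ : 1 < α₂)
    (hcop₁ : Int.gcd α₁ β₁ = 1) (hcop₂ : Int.gcd α₂ β₂ = 1)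
    (hγδ₁ : α₁ * δ₁ - β₁ * γ₁ = 1) (hγδ₂ : α₂ * δ₂ - β₂ * γ₂ = 1)
    (hε : ε = 1 ∨ ε = -1) (hβ₁ : β₁ = 1 + k₁ * α₁) (hβ₂ : β₂ = -ε + k₂ * α₂) :
    ∀ b : ℤ, w α₁ α₂ β₁ β₂ γ₁ δ₁ 0 b 1 (-b + k₁ + k₂) =
      η₂ α₁ α₂ β₁ β₂ γ₂ δ₂ ^ ε := by
  intro b
  set C1 := c₁ α₁ α₂ β₁ β₂ with hC1
  set C2 := c₂ α₁ α₂ β₁ β₂ with hC2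
  set H := hGen α₁ α₂ β₁ β₂ with hH
  have hc1 : Commute C1 H := comm_c₁ α₁ α₂ β₁ β₂
  have hc2 : Commute C2 H := comm_c₂ α₁ α₂ β₁ β₂
  have r1 : C1 ^ α₁ = H ^ (-β₁) := by
    rw [zpow_neg, eq_inv_iff_mul_eq_one]; exact rel_c₁ α₁ α₂ β₁ β₂
  have r2 : C2 ^ α₂ = H ^ (-β₂) := by
    rw [zpow_neg, eq_inv_iff_mul_eq_one]; exact rel_c₂ α₁ α₂ β₁ β₂
  -- exponents
  have hm : γ₁ + 1 = α₁ * (δ₁ - k₁ * γ₁) := by rw [hβ₁] at hγδ₁; ring_nf; ring_nf at hγδ₁; linarith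
  have hn : ε * γ₂ - 1 = α₂ * (k₂ * γ₂ - δ₂) := by
    rcases hε with h | h <;> subst h <;> rw [hβ₂] at hγδ₂ <;> ring_nf <;> ring_nf at hγδ₂ <;>
      linarith
  have hε2 : ε * ε = 1 := by rcases hε with h | h <;> subst h <;> norm_num
  -- push-H-right lemmas
  have s1 : ∀ (z y : ℤ) (x : SeifertGroup α₁ α₂ β₁ β₂),
      H ^ z * (C1 ^ y * x) = C1 ^ y * (H ^ z * x) := by
    intro z y x
    rw [← mul_assoc, ← mul_assoc, (hc1.zpow_zpow y z).eq]
  have s2 : ∀ (z y : ℤ) (x : SeifertGroup α₁ α₂ β₁ β₂),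
      H ^ z * (C2 ^ y * x) = C2 ^ y * (H ^ z * x) := by
    intro z y x
    rw [← mul_assoc, ← mul_assoc, (hc2.zpow_zpow y z).eq]
  have s1' : ∀ (z y : ℤ), H ^ z * C1 ^ y = C1 ^ y * H ^ z := fun z y =>
    ((hc1.zpow_zpow y z).eq).symm
  have s2' : ∀ (z y : ℤ), H ^ z * C2 ^ y = C2 ^ y * H ^ z := fun z y =>
    ((hc2.zpow_zpow y z).eq).symm
  have hHH : ∀ (u v : ℤ) (x : SeifertGroup α₁ α₂ β₁ β₂),
      H ^ u * (H ^ v * x) = H ^ (u + v) * x := by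
    intro u v x; rw [← mul_assoc, ← zpow_add]
  have hCC : ∀ (u v : ℤ) (x : SeifertGroup α₁ α₂ β₁ β₂),
      C1 ^ u * (C1 ^ v * x) = C1 ^ (u + v) * x := by
    intro u v x; rw [← mul_assoc, ← zpow_add]
  -- LHS simplification
  have lhs : w α₁ α₂ β₁ β₂ γ₁ δ₁ 0 b 1 (-b + k₁ + k₂)
      = C1 ^ (γ₁ + 1) * (C2 ^ (1 : ℤ) * H ^ (δ₁ + k₁ + k₂)) := by
    rw [w, η₁]
    rw [zpow_zero, one_mul, zpow_one, ← hC1, ← hC2, ← hH]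
    have h12 : C1 * C2 = C1 ^ (1:ℤ) * C2 ^ (1:ℤ) := by simp
    rw [h12]
    simp only [mul_assoc]
    rw [s1 b γ₁, hHH b δ₁, s1 (b + δ₁) 1, s2 (b + δ₁) 1, ← zpow_add, hCC γ₁ 1]
    have : b + δ₁ + (-b + k₁ + k₂) = δ₁ + k₁ + k₂ := by ring
    rw [this]
  rw [lhs]
  -- rewrite C1 ^ (γ₁+1)
  have e1 : C1 ^ (γ₁ + 1) = H ^ (-β₁ * (δ₁ - k₁ * γ₁)) := by
    rw [hm, zpow_mul, r1, ← zpow_mul]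
  -- RHS
  have rhs : η₂ α₁ α₂ β₁ β₂ γ₂ δ₂ ^ ε = C2 ^ (ε * γ₂) * H ^ (ε * δ₂) := by
    rw [η₂, ← hC2, ← hH, (hc2.zpow_zpow γ₂ δ₂).mul_zpow, ← zpow_mul, ← zpow_mul,
      mul_comm γ₂ ε, mul_comm δ₂ ε]
  rw [rhs, e1]
  have e2 : C2 ^ (ε * γ₂) = C2 ^ (1:ℤ) * H ^ (-β₂ * (k₂ * γ₂ - δ₂)) := by
    have : C2 ^ (ε * γ₂) = C2 ^ (1:ℤ) * C2 ^ (ε * γ₂ - 1) := by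
      rw [← zpow_add]; congr 1; ring
    rw [this, hn, zpow_mul, r2, ← zpow_mul]
  rw [e2, s2, ← zpow_add, mul_assoc, ← zpow_add]
  congr 2
  have : β₁ = 1 + k₁ * α₁ := hβ₁
  rw [hβ₁, hβ₂]
  have hα₁δ : α₁ * δ₁ = 1 + (1 + k₁ * α₁) * γ₁ := by rw [hβ₁] at hγδ₁; linarith
  have hα₂δ : α₂ * δ₂ = 1 + (-ε + k₂ * α₂) * γ₂ := by rw [hβ₂] at hγδ₂; linarith
  linear_combination (-k₁) * hα₁δ + (-k₂) * hα₂δ
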